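/- If μ is a probability measure on ℝ^d whose j-th marginal μ_j differs from ν_j for some j, then Φ*(μ) = sup_{f ∈ C_b}{∫f dμ − Φ(f)} = +∞. -/

import Mathlib

open MeasureTheory BoundedContinuousFunction Pointwise

noncomputable section

/-- A trading strategy: single-asset positions `ψ_j` (continuous bounded functions on `ℝ`)
and positions `b_i` in the traded multi-asset options. -/
abbrev Strat (d : ℕ) (ι : Type) := (Fin d → (ℝ →ᵇ ℝ)) × (ι → ℝ)

/-- Payoff of the strategy `s` at `x`: `Σ_j ψ_j(x_j) + Σ_i b_i φ_i(x)`. -/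
def payoff {d : ℕ} {ι : Type} [Fintype ι] (φ : ι → ((Fin d → ℝ) →ᵇ ℝ))
    (s : Strat d ι) (x : Fin d → ℝ) : ℝ :=
  (∑ j, s.1 j (x j)) + ∑ i, s.2 i * φ i x

/-- The superhedging set `Θ(f)`. -/
def Theta {d : ℕ} {ι : Type} [Fintype ι] (φ : ι → ((Fin d → ℝ) →ᵇ ℝ))
    (f : (Fin d → ℝ) → ℝ) : Set (Strat d ι) :=
  {s | ∀ x, f x ≤ payoff φ s x}

/-- The cost `π(ψ,b) = Σ_j ∫ ψ_j dν_j + Σ_i b_i p_i` of a strategy. -/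
def cost {d : ℕ} {ι : Type} [Fintype ι] (ν : Fin d → Measure ℝ) (p : ι → ℝ)
    (s : Strat d ι) : ℝ :=
  (∑ j, ∫ y, s.1 j y ∂(ν j)) + ∑ i, s.2 i * p i

/-- The superhedging price functional `Φ(f)`. -/
def Phi {d : ℕ} {ι : Type} [Fintype ι] (ν : Fin d → Measure ℝ)
    (φ : ι → ((Fin d → ℝ) →ᵇ ℝ)) (p : ι → ℝ) (f : (Fin d → ℝ) → ℝ) : ℝ :=
  sInf (cost ν p '' Theta φ f)

/-- The calibration set `Q`: probability measures with marginals `ν_j` matching the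
prices `p_i` of the payoffs `φ_i`. -/
def calib {d : ℕ} {ι : Type} [Fintype ι] (ν : Fin d → Measure ℝ)
    (φ : ι → ((Fin d → ℝ) →ᵇ ℝ)) (p : ι → ℝ) : Set (Measure (Fin d → ℝ)) :=
  {μ | IsProbabilityMeasure μ ∧ (∀ j, μ.map (fun x => x j) = ν j) ∧
        ∀ i, ∫ x, φ i x ∂μ = p i}

/-- Existence of a uniform strong arbitrage. -/
def USA {d : ℕ} {ι : Type} [Fintype ι] (ν : Fin d → Measure ℝ)
    (φ : ι → ((Fin d → ℝ) →ᵇ ℝ)) (p : ι → ℝ) : Prop :=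
  ∃ (s : Strat d ι) (ε : ℝ), 0 < ε ∧ (∀ x, ε ≤ payoff φ s x) ∧ cost ν p s ≤ 0


/-- Two finite Borel measures on `ℝ` that integrate all real-valued bounded continuous
functions equally are equal. -/
lemma exists_bcf_integral_ne {μ' ν' : Measure ℝ} [IsFiniteMeasure μ'] [IsFiniteMeasure ν']
    (h : μ' ≠ ν') : ∃ g : ℝ →ᵇ ℝ, ∫ x, g x ∂μ' ≠ ∫ x, g x ∂ν' := by
  by_contra hc
  push_neg at hc
  apply h
  apply MeasureTheory.ext_of_forall_lintegral_eq_of_IsFiniteMeasure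
  intro f
  set g : ℝ →ᵇ ℝ := f.comp (fun r : NNReal => (r : ℝ))
    (LipschitzWith.of_dist_le_mul (K := 1) (fun x y => by
      rw [NNReal.dist_eq, Real.dist_eq, NNReal.coe_one, one_mul])) with hg
  have h1 : (∫⁻ x, (f x : ENNReal) ∂μ').toReal = (∫⁻ x, (f x : ENNReal) ∂ν').toReal := by
    rw [BoundedContinuousFunction.toReal_lintegral_coe_eq_integral,
      BoundedContinuousFunction.toReal_lintegral_coe_eq_integral]
    exact hc g
  exact (ENNReal.toReal_eq_toReal_iff' (f.lintegral_lt_top_of_nnreal μ').ne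
    (f.lintegral_lt_top_of_nnreal ν').ne).mp h1

/-- if some marginal of the probability measure `μ` differs from `ν_j`,
then `Φ*(μ) = sup_f {∫ f dμ - Φ(f)} = +∞`. -/
theorem conjugate_infinite_of_marginal_mismatch {d : ℕ} {ι : Type} [Fintype ι]
    (ν : Fin d → Measure ℝ) [∀ j, IsProbabilityMeasure (ν j)]
    (φ : ι → ((Fin d → ℝ) →ᵇ ℝ)) (p : ι → ℝ)
    (μ : Measure (Fin d → ℝ)) [IsProbabilityMeasure μ]
    (hmarg : ∃ j, μ.map (fun x => x j) ≠ ν j) :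
    (⨆ f : (Fin d → ℝ) →ᵇ ℝ, (((∫ x, f x ∂μ) - Phi ν φ p ⇑f : ℝ) : EReal)) = ⊤ := by
  classical
  obtain ⟨j, hj⟩ := hmarg
  haveI : IsProbabilityMeasure (μ.map (fun x => x j)) :=
    Measure.isProbabilityMeasure_map (measurable_pi_apply j).aemeasurable
  -- find a bounded continuous function with strictly larger integral under the marginal of μ
  obtain ⟨g, hg⟩ : ∃ g : ℝ →ᵇ ℝ,
      ∫ x, g x ∂(ν j) < ∫ x, g x ∂(μ.map fun x => x j) := by
    obtain ⟨g, hg⟩ := exists_bcf_integral_ne hj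
    rcases Ne.lt_or_gt hg with h | h
    · refine ⟨-g, ?_⟩
      simpa [integral_neg] using neg_lt_neg h
    · exact ⟨g, h⟩
  -- recenter so ∫ h d(ν j) = 0
  set c : ℝ := ∫ x, g x ∂(ν j) with hc
  set h : ℝ →ᵇ ℝ := g - BoundedContinuousFunction.const ℝ c with hh
  have hint : ∀ (m : Measure ℝ) [IsProbabilityMeasure m],
      ∫ x, h x ∂m = (∫ x, g x ∂m) - c := by
    intro m _
    have heq : ∫ x, h x ∂m = ∫ x, (g x - c) ∂m := rfl
    rw [heq, integral_sub (g.integrable m) (integrable_const c), integral_const]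
    simp
  have hν0 : ∫ x, h x ∂(ν j) = 0 := by rw [hint]; simp [hc]
  set δ : ℝ := ∫ x, h x ∂(μ.map fun x => x j) with hδ
  have hδpos : 0 < δ := by
    rw [hδ, hint]
    linarith
  -- projection as a continuous map
  set πj : C(Fin d → ℝ, ℝ) := ⟨fun x => x j, continuous_apply j⟩ with hπj
  rw [iSup_eq_top]
  intro b hb
  obtain ⟨r, hbr, -⟩ := EReal.exists_between_coe_real hb
  set lam : ℝ := (r + 1) / δ with hlam
  have hlamδ : lam * δ = r + 1 := div_mul_cancel₀ _ hδpos.ne'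
  set F : (Fin d → ℝ) →ᵇ ℝ := (lam • h).compContinuous πj with hF
  refine ⟨F, ?_⟩
  -- the superhedging strategy
  set s : Strat d ι := (Function.update (0 : Fin d → (ℝ →ᵇ ℝ)) j (lam • h), 0) with hs
  have hsum : ∀ x : Fin d → ℝ, (∑ j', s.1 j' (x j')) = lam * h (x j) := by
    intro x
    rw [Finset.sum_eq_single j]
    · simp [hs]
    · intro j' _ hj'
      simp [hs, Function.update_of_ne hj']
    · intro habs
      exact absurd (Finset.mem_univ j) habs
  have hmem : s ∈ Theta φ F := by
    intro x
    simp only [payoff, hsum x, hs]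
    simp [hF, hπj]
    exact le_of_eq (hsum x).symm
  have hcost : cost ν p s = 0 := by
    simp only [cost, hs]
    rw [Finset.sum_eq_single j]
    · simp only [Function.update_self, BoundedContinuousFunction.coe_smul, smul_eq_mul]
      rw [integral_const_mul, hν0]
      simp
    · intro j' _ hj'
      simp [Function.update_of_ne hj']
    · intro habs
      exact absurd (Finset.mem_univ j) habs
  have hPhi : Phi ν φ p ⇑F ≤ 0 := by
    by_cases hbdd : BddBelow (cost ν p '' Theta φ ⇑F)
    · exact le_trans (csInf_le hbdd ⟨s, hmem, rfl⟩) (le_of_eq hcost)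
    · simp [Phi, Real.sInf_of_not_bddBelow hbdd]
  have hintF : ∫ x, F x ∂μ = lam * δ := by
    have h1 : ∫ x, F x ∂μ = ∫ x, lam * h (x j) ∂μ := by
      simp [hF, hπj]
    rw [h1, integral_const_mul, hδ,
      integral_map (measurable_pi_apply j).aemeasurable
        h.continuous.measurable.aestronglyMeasurable]
  have hval : r < (∫ x, F x ∂μ) - Phi ν φ p ⇑F := by
    rw [hintF, hlamδ]
    linarith
  calc b < (r : EReal) := hbr
    _ < (((∫ x, F x ∂μ) - Phi ν φ p ⇑F : ℝ) : EReal) := by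
        exact_mod_cast hval
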